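/- Let E be a directed graph. The path space E* ∪ E^∞ with the topology whose basic open sets are Z(μ∖G) (μ ∈ E*, G ⊆ s(μ)E¹ finite) is a Hausdorff topological space. -/

import Mathlib

structure DirectedGraph where
  V : Type
  E : Type
  r : E → V
  s : E → V

namespace DirectedGraph

variable {G : DirectedGraph}

/-- A finite path: a list of edges `μ₁ … μₙ` with `s μᵢ = r μᵢ₊₁`, together with its
range vertex (which is the range of the first edge when the path is nonempty, and is
the defining datum of the path when the path has length zero, i.e. is a vertex). -/
structure FinPath (G : DirectedGraph) where
  vtx : G.V
  edges : List G.E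
  chain : edges.Chain' fun e f => G.s e = G.r f
  hv : ∀ e ∈ edges.head?, G.r e = vtx

/-- An infinite path `μ₁μ₂…` with `s μᵢ = r μᵢ₊₁`. -/
structure InfPath (G : DirectedGraph) where
  edge : ℕ → G.E
  chain : ∀ n, G.s (edge n) = G.r (edge (n + 1))

/-- The path space `E* ∪ E^∞`. -/
abbrev PathSpace (G : DirectedGraph) := FinPath G ⊕ InfPath G

namespace FinPath

def length (μ : FinPath G) : ℕ := μ.edges.length

def range (μ : FinPath G) : G.V := μ.vtx

def source (μ : FinPath G) : G.V := (μ.edges.getLast?).elim μ.vtx G.s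

/-- A vertex, regarded as a path of length zero. -/
def ofVertex (G : DirectedGraph) (v : G.V) : FinPath G :=
  ⟨v, [], List.isChain_nil, by simp⟩

/-- `μ.Extends ν` means `μ = νν′` for some path `ν′`. -/
def Extends (μ ν : FinPath G) : Prop := μ.vtx = ν.vtx ∧ ν.edges <+: μ.edges

end FinPath

def InfPath.range (x : InfPath G) : G.V := G.r (x.edge 0)

/-- `x.Extends ν` means the infinite path `x` is of the form `νx′`. -/
def InfPath.Extends (x : InfPath G) (ν : FinPath G) : Prop :=
  (ν.edges = [] → x.range = ν.vtx) ∧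
  ∀ i, (h : i < ν.edges.length) → x.edge i = ν.edges.get ⟨i, h⟩

/-- The cylinder set `Z(μ) = {w ∈ E* ∪ E^∞ : w = μw′}`. -/
def Cyl (μ : FinPath G) : Set (PathSpace G) :=
  {w | match w with
       | Sum.inl lam => lam.Extends μ
       | Sum.inr x => x.Extends μ}

/-- The cylinder set `Z(μe)` of the path `μ` followed by the edge `e`. -/
def CylSnoc (μ : FinPath G) (e : G.E) : Set (PathSpace G) :=
  {w | match w with
       | Sum.inl lam => (μ.edges ++ [e]) <+: lam.edges
       | Sum.inr x => ∀ i, (h : i < (μ.edges ++ [e]).length) →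
           x.edge i = (μ.edges ++ [e]).get ⟨i, h⟩}

/-- `Z(μ∖G) := Z(μ) ∖ ⋃_{e ∈ G} Z(μe)`. -/
def CylMinus (μ : FinPath G) (GS : Finset G.E) : Set (PathSpace G) :=
  Cyl μ \ ⋃ e ∈ GS, CylSnoc μ e

/-- The basic sets `Z(μ∖G)` for `μ ∈ E*` and `G ⊆ s(μ)E¹` finite. -/
def basicSets (G : DirectedGraph) : Set (Set (PathSpace G)) :=
  {S | ∃ (μ : FinPath G) (GS : Finset G.E),
        (∀ e ∈ GS, G.r e = μ.source) ∧ S = CylMinus μ GS}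

end DirectedGraph


namespace DirectedGraph

variable {G : DirectedGraph}

theorem FinPath.ext' {μ ν : FinPath G} (h1 : μ.vtx = ν.vtx) (h2 : μ.edges = ν.edges) :
    μ = ν := by
  cases μ; cases ν; simp_all

theorem InfPath.ext' {x y : InfPath G} (h : x.edge = y.edge) : x = y := by
  cases x; cases y; simp_all

theorem InfPath.range_extends {x : InfPath G} {μ : FinPath G} (h : x.Extends μ) :
    x.range = μ.vtx := by
  rcases μ with ⟨v, edges, hc, hv⟩
  cases edges with
  | nil => exact h.1 rfl
  | cons a l =>
    have h0 := h.2 0 (by simp)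
    have ha := hv a (by simp)
    simp only [List.get] at h0
    simp only [InfPath.range, h0]
    exact ha

theorem mem_cyl_inl {μ lam : FinPath G} : Sum.inl lam ∈ Cyl μ ↔ lam.Extends μ := Iff.rfl

theorem mem_cyl_inr {μ : FinPath G} {x : InfPath G} : Sum.inr x ∈ Cyl μ ↔ x.Extends μ := Iff.rfl

theorem mem_cyl_self (μ : FinPath G) : (Sum.inl μ : PathSpace G) ∈ Cyl μ :=
  ⟨rfl, List.prefix_refl _⟩

theorem not_mem_cylSnoc (μ : FinPath G) (e : G.E) :
    (Sum.inl μ : PathSpace G) ∉ CylSnoc μ e := by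
  intro h
  have := List.IsPrefix.length_le (h : (μ.edges ++ [e]) <+: μ.edges)
  simp at this

theorem prefix_of_extends {x : InfPath G} {μ ν : FinPath G} (hμ : x.Extends μ)
    (hν : x.Extends ν) (h : μ.edges.length ≤ ν.edges.length) : μ.edges <+: ν.edges := by
  have heq : μ.edges = ν.edges.take μ.edges.length := by
    apply List.ext_getElem
    · simp; omega
    · intro i h1 h2
      have e1 := hμ.2 i h1
      have e2 := hν.2 i (lt_of_lt_of_le h1 h)
      simp only [List.get_eq_getElem] at e1 e2
      simp [List.getElem_take, ← e1, ← e2]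
  exact heq ▸ List.take_prefix _ _

theorem cyl_mono {μ ν : FinPath G} (h : ν.Extends μ) : Cyl ν ⊆ Cyl μ := by
  rintro (lam | x) hw
  · exact ⟨hw.1.trans h.1, h.2.trans hw.2⟩
  · refine ⟨fun _ => (InfPath.range_extends hw).trans h.1, fun i hi => ?_⟩
    have hi' : i < ν.edges.length := lt_of_lt_of_le hi h.2.length_le
    have := hw.2 i hi'
    simp only [List.get_eq_getElem] at this ⊢
    rw [this, List.IsPrefix.getElem h.2 hi]

theorem cyl_compat {μ ν : FinPath G} {w : PathSpace G} (hμ : w ∈ Cyl μ) (hν : w ∈ Cyl ν) :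
    μ.Extends ν ∨ ν.Extends μ := by
  match w with
  | Sum.inl lam =>
    rcases List.prefix_or_prefix_of_prefix hν.2 hμ.2 with h | h
    · exact Or.inl ⟨hμ.1.symm.trans hν.1, h⟩
    · exact Or.inr ⟨hν.1.symm.trans hμ.1, h⟩
  | Sum.inr x =>
    have hv : μ.vtx = ν.vtx :=
      (InfPath.range_extends hμ).symm.trans (InfPath.range_extends hν)
    rcases le_total μ.edges.length ν.edges.length with h | h
    · exact Or.inr ⟨hv.symm, prefix_of_extends hμ hν h⟩
    · exact Or.inl ⟨hv, prefix_of_extends hν hμ h⟩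

theorem cyl_disjoint {μ ν : FinPath G} (h1 : ¬ μ.Extends ν) (h2 : ¬ ν.Extends μ) :
    Disjoint (Cyl μ) (Cyl ν) :=
  Set.disjoint_left.2 fun _ hμ hν => (cyl_compat hμ hν).elim h1 h2

theorem cyl_mem_basic (μ : FinPath G) : Cyl μ ∈ basicSets G :=
  ⟨μ, ∅, by simp, by simp [CylMinus]⟩

/-- Truncation of an infinite path to a finite path of length `n`. -/
def trunc (x : InfPath G) (n : ℕ) : FinPath G where
  vtx := x.range
  edges := List.ofFn fun i : Fin n => x.edge i
  chain := by
    show List.IsChain _ _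
    rw [List.isChain_iff_getElem]
    intro i h
    simp only [List.length_ofFn] at h
    simp only [List.getElem_ofFn]
    simpa using x.chain i
  hv := by
    intro e he
    cases n with
    | zero => simp at he
    | succ m =>
      rw [List.ofFn_succ] at he
      simp only [List.head?_cons, Option.mem_def, Option.some.injEq] at he
      subst he
      rfl

@[simp] theorem trunc_length (x : InfPath G) (n : ℕ) :
    (trunc x n).edges.length = n := by simp [trunc]

@[simp] theorem trunc_getElem (x : InfPath G) (n i : ℕ) (h : i < (trunc x n).edges.length) :
    (trunc x n).edges[i] = x.edge i := by
  simp [trunc]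

theorem extends_trunc (x : InfPath G) (n : ℕ) : x.Extends (trunc x n) := by
  refine ⟨fun _ => rfl, fun i hi => ?_⟩
  simp only [List.get_eq_getElem]
  exact (trunc_getElem x n i hi).symm

theorem mem_cyl_trunc (x : InfPath G) (n : ℕ) :
    (Sum.inr x : PathSpace G) ∈ Cyl (trunc x n) := extends_trunc x n

/-- Key separation lemma: if `ν` strictly extends `μ`, then there is a basic set
containing `μ` and disjoint from `Z(ν)`. -/
theorem sep_extends {μ ν : FinPath G} (h : ν.Extends μ)
    (hlen : μ.edges.length < ν.edges.length) :
    ∃ U ∈ basicSets G, (Sum.inl μ : PathSpace G) ∈ U ∧ Disjoint U (Cyl ν) := by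
  obtain ⟨t, ht⟩ := h.2
  cases t with
  | nil =>
    rw [List.append_nil] at ht
    rw [← ht] at hlen
    omega
  | cons a t' =>
    have hpre : μ.edges ++ [a] <+: ν.edges := ⟨t', by simpa using ht⟩
    have hsrc : G.r a = μ.source := by
      rcases hμe : μ.edges with _ | ⟨b, l⟩
      · -- μ is a vertex
        have : ν.edges = a :: t' := by rw [← ht, hμe]; rfl
        have := ν.hv a (by rw [this]; simp)
        rw [this, h.1]
        simp [FinPath.source, hμe]
      · -- μ ends with an edge
        have hlen' : μ.edges.length - 1 < ν.edges.length - 1 := by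
          rw [hμe] at hlen ⊢; simp at hlen ⊢; omega
        have hc : G.s (ν.edges.get ⟨μ.edges.length - 1, by omega⟩) =
            G.r (ν.edges.get ⟨μ.edges.length - 1 + 1, by omega⟩) :=
          (List.isChain_iff_getElem.1 ν.chain) (μ.edges.length - 1) (by omega)
        have hμl : 0 < μ.edges.length := by rw [hμe]; simp
        have hgl : ν.edges.get ⟨μ.edges.length - 1, by omega⟩ =
            μ.edges.getLast (by rw [hμe]; simp) := by
          simp only [List.get_eq_getElem]
          rw [← List.IsPrefix.getElem h.2 (by omega)]
          rw [List.getLast_eq_getElem]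
        have hga : ν.edges.get ⟨μ.edges.length - 1 + 1, by omega⟩ = a := by
          simp only [List.get_eq_getElem]
          have h4 : ν.edges[μ.edges.length - 1 + 1]? = some a := by
            rw [show μ.edges.length - 1 + 1 = μ.edges.length by omega, ← ht,
              List.getElem?_append_right (le_refl _)]
            simp
          rw [List.getElem?_eq_getElem (by omega)] at h4
          exact Option.some.inj h4
        rw [hgl, hga] at hc
        rw [← hc]
        show G.s (μ.edges.getLast _) = μ.source
        rw [FinPath.source, List.getLast?_eq_getLast (by simp [hμe])]
        rfl
    refine ⟨CylMinus μ {a}, ⟨μ, {a}, by simpa using hsrc, rfl⟩, ⟨mem_cyl_self μ, ?_⟩, ?_⟩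
    · simp only [Set.mem_iUnion]
      rintro ⟨e, he, hmem⟩
      simp only [Finset.mem_singleton] at he
      exact not_mem_cylSnoc μ a (he ▸ hmem)
    · refine Set.disjoint_left.2 fun w hw hw' => ?_
      have hsnoc : w ∈ CylSnoc μ a := by
        match w with
        | Sum.inl lam => exact hpre.trans hw'.2
        | Sum.inr x =>
          intro i hi
          simp only [List.length_append, List.length_singleton] at hi
          have hi' : i < ν.edges.length := lt_of_lt_of_le (by simpa using hi) hpre.length_le
          have := hw'.2 i hi'
          simp only [List.get_eq_getElem] at this ⊢
          rw [this, List.IsPrefix.getElem hpre (by simpa using hi)]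
      exact hw.2 (Set.mem_iUnion.2 ⟨a, Set.mem_iUnion.2 ⟨Finset.mem_singleton_self a, hsnoc⟩⟩)

theorem sep_inl_inl {μ ν : FinPath G} (hne : μ ≠ ν) :
    ∃ U ∈ basicSets G, ∃ V ∈ basicSets G,
      (Sum.inl μ : PathSpace G) ∈ U ∧ (Sum.inl ν : PathSpace G) ∈ V ∧ Disjoint U V := by
  by_cases h1 : ν.Extends μ
  · have hlen : μ.edges.length < ν.edges.length := by
      rcases lt_or_eq_of_le h1.2.length_le with h | h
      · exact h
      · exact absurd (FinPath.ext' h1.1.symm (h1.2.eq_of_length h)) hne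
    obtain ⟨U, hU, hμU, hdisj⟩ := sep_extends h1 hlen
    exact ⟨U, hU, Cyl ν, cyl_mem_basic ν, hμU, mem_cyl_self ν, hdisj⟩
  · by_cases h2 : μ.Extends ν
    · have hlen : ν.edges.length < μ.edges.length := by
        rcases lt_or_eq_of_le h2.2.length_le with h | h
        · exact h
        · exact absurd (FinPath.ext' h2.1.symm (h2.2.eq_of_length h)) (Ne.symm hne)
      obtain ⟨U, hU, hνU, hdisj⟩ := sep_extends h2 hlen
      exact ⟨Cyl μ, cyl_mem_basic μ, U, hU, mem_cyl_self μ, hνU, hdisj.symm⟩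
    · exact ⟨Cyl μ, cyl_mem_basic μ, Cyl ν, cyl_mem_basic ν, mem_cyl_self μ,
        mem_cyl_self ν, cyl_disjoint h2 h1⟩

theorem sep_inl_inr (μ : FinPath G) (x : InfPath G) :
    ∃ U ∈ basicSets G, ∃ V ∈ basicSets G,
      (Sum.inl μ : PathSpace G) ∈ U ∧ (Sum.inr x : PathSpace G) ∈ V ∧ Disjoint U V := by
  set ν := trunc x (μ.edges.length + 1) with hν
  by_cases hx : x.Extends μ
  · have hext : ν.Extends μ := by
      refine ⟨InfPath.range_extends hx, ?_⟩
      exact prefix_of_extends hx (extends_trunc x _) (by simp [hν])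
    have hlen : μ.edges.length < ν.edges.length := by simp [hν]
    obtain ⟨U, hU, hμU, hdisj⟩ := sep_extends hext hlen
    exact ⟨U, hU, Cyl ν, cyl_mem_basic ν, hμU, mem_cyl_trunc x _, hdisj⟩
  · have h1 : ¬ μ.Extends ν := by
      intro h
      have := h.2.length_le
      simp [hν] at this
    have h2 : ¬ ν.Extends μ := fun h => hx (cyl_mono h (mem_cyl_trunc x _))
    exact ⟨Cyl μ, cyl_mem_basic μ, Cyl ν, cyl_mem_basic ν, mem_cyl_self μ,
      mem_cyl_trunc x _, cyl_disjoint h1 h2⟩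

theorem sep_inr_inr {x y : InfPath G} (hne : x ≠ y) :
    ∃ U ∈ basicSets G, ∃ V ∈ basicSets G,
      (Sum.inr x : PathSpace G) ∈ U ∧ (Sum.inr y : PathSpace G) ∈ V ∧ Disjoint U V := by
  have : x.edge ≠ y.edge := fun h => hne (InfPath.ext' h)
  obtain ⟨n, hn⟩ := Function.ne_iff.1 this
  have key : ∀ {u v : InfPath G}, u.edge n ≠ v.edge n →
      ¬ (trunc u (n + 1)).Extends (trunc v (n + 1)) := by
    intro u v huv h
    apply huv
    have heq : (trunc v (n + 1)).edges = (trunc u (n + 1)).edges :=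
      h.2.eq_of_length (by simp)
    have h3 : (trunc v (n + 1)).edges[n]? = (trunc u (n + 1)).edges[n]? := by rw [heq]
    rw [List.getElem?_eq_getElem (by simp), List.getElem?_eq_getElem (by simp)] at h3
    simp only [trunc_getElem] at h3
    simpa using h3.symm
  exact ⟨Cyl (trunc x (n + 1)), cyl_mem_basic _, Cyl (trunc y (n + 1)), cyl_mem_basic _,
    mem_cyl_trunc x _, mem_cyl_trunc y _, cyl_disjoint (key hn) (key (Ne.symm hn))⟩

end DirectedGraph


open DirectedGraph in
/-- The path space with the cylinder-set topology is Hausdorff. -/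
theorem pathSpace_t2 (G : DirectedGraph) :
    @T2Space (PathSpace G) (TopologicalSpace.generateFrom (basicSets G)) := by
  letI : TopologicalSpace (PathSpace G) := .generateFrom (basicSets G)
  refine ⟨fun w₁ w₂ hne => ?_⟩
  have hsep : ∃ U ∈ basicSets G, ∃ V ∈ basicSets G, w₁ ∈ U ∧ w₂ ∈ V ∧ Disjoint U V := by
    match w₁, w₂ with
    | Sum.inl μ, Sum.inl ν => exact sep_inl_inl fun h => hne (congrArg Sum.inl h)
    | Sum.inl μ, Sum.inr x => exact sep_inl_inr μ x
    | Sum.inr x, Sum.inl μ =>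
      obtain ⟨U, hU, V, hV, h1, h2, h3⟩ := sep_inl_inr μ x
      exact ⟨V, hV, U, hU, h2, h1, h3.symm⟩
    | Sum.inr x, Sum.inr y => exact sep_inr_inr fun h => hne (congrArg Sum.inr h)
  obtain ⟨U, hU, V, hV, h1, h2, h3⟩ := hsep
  exact ⟨U, V, TopologicalSpace.GenerateOpen.basic U hU,
    TopologicalSpace.GenerateOpen.basic V hV, h1, h2, h3⟩
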